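/- There exists an absolute constant c > 0 such that for every positive integer m there is an N with the following property: for every n ≥ N there is a placement of exactly G(m) queens on the n×n board whose number of attacked squares is at most m·n + c·m². -/

import Mathlib

/-- The n×n board: squares (x,y) ∈ ℤ×ℤ with 1 ≤ x ≤ n and 1 ≤ y ≤ n. -/
noncomputable def board (n : ℕ) : Finset (ℤ × ℤ) := Finset.Icc 1 (n : ℤ) ×ˢ Finset.Icc 1 (n : ℤ)

/-- A line of the board: a row (fixed y), a column (fixed x), a positive
diagonal (fixed x − y), or a negative diagonal (fixed x + y). -/
inductive Line : Type where
  | row : ℤ → Line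
  | col : ℤ → Line
  | posDiag : ℤ → Line
  | negDiag : ℤ → Line
deriving DecidableEq

/-- The defining condition for a point to be on a given line. -/
def Line.pred : Line → ℤ × ℤ → Prop
  | .row b, p => p.2 = b
  | .col a, p => p.1 = a
  | .posDiag d, p => p.1 - p.2 = d
  | .negDiag s, p => p.1 + p.2 = s

instance (L : Line) (p : ℤ × ℤ) : Decidable (L.pred p) :=
  match L with
  | .row b => inferInstanceAs (Decidable (p.2 = b))
  | .col a => inferInstanceAs (Decidable (p.1 = a))
  | .posDiag d => inferInstanceAs (Decidable (p.1 - p.2 = d))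
  | .negDiag s => inferInstanceAs (Decidable (p.1 + p.2 = s))

/-- The set of squares of the n×n board lying on a line. -/
noncomputable def Line.squares (n : ℕ) (L : Line) : Finset (ℤ × ℤ) := (board n).filter L.pred

/-- The length of a line: its number of board squares. -/
noncomputable def Line.length (n : ℕ) (L : Line) : ℕ := (L.squares n).card

/-- Whether a line is a diagonal (of either orientation). -/
def Line.isDiag : Line → Prop
  | .posDiag _ => True
  | .negDiag _ => True
  | _ => False

/-- The set of board squares attacked by a placement S of queens: squares q on
the board such that some queen p ∈ S with p ≠ q shares a row, column, or
diagonal with q. -/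
noncomputable def attacked (n : ℕ) (S : Finset (ℤ × ℤ)) : Finset (ℤ × ℤ) :=
  S.biUnion fun p => (board n).filter fun q =>
    q ≠ p ∧ (p.1 = q.1 ∨ p.2 = q.2 ∨ p.1 - p.2 = q.1 - q.2 ∨ p.1 + p.2 = q.1 + q.2)

/-- G(m) = ⌊m²/12⌋ + 1 if m ≡ 3, 6, 9 (mod 12) or m = 10; ⌊m²/12⌋ otherwise. -/
def G (m : ℕ) : ℕ :=
  if m % 12 = 3 ∨ m % 12 = 6 ∨ m % 12 = 9 ∨ m = 10 then m ^ 2 / 12 + 1 else m ^ 2 / 12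

open Finset

namespace QAux

lemma mem_board {n : ℕ} {q : ℤ × ℤ} :
    q ∈ board n ↔ 1 ≤ q.1 ∧ q.1 ≤ (n : ℤ) ∧ 1 ≤ q.2 ∧ q.2 ≤ (n : ℤ) := by
  simp [board, Finset.mem_product, Finset.mem_Icc, and_assoc]

lemma card_filter_le_Icc_fst {n : ℕ} (P : ℤ × ℤ → Prop) [DecidablePred P]
    (lo hi : ℤ)
    (hmem : ∀ q ∈ board n, P q → q.1 ∈ Finset.Icc lo hi)
    (hsnd : ∀ q₁ q₂ : ℤ × ℤ, P q₁ → P q₂ → q₁.1 = q₂.1 → q₁.2 = q₂.2) :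
    ((board n).filter P).card ≤ (hi + 1 - lo).toNat := by
  have h := Finset.card_le_card_of_injOn (f := fun q : ℤ × ℤ => q.1)
      (s := (board n).filter P) (t := Finset.Icc lo hi)
      (by intro q hq; simp only [Finset.mem_coe, Finset.mem_filter] at hq; exact hmem q hq.1 hq.2)
      (by intro q₁ h₁ q₂ h₂ h
          simp only [Finset.coe_filter, Set.mem_setOf_eq] at h₁ h₂
          exact Prod.ext h (hsnd q₁ q₂ h₁.2 h₂.2 h))
  simpa [Int.card_Icc] using h

lemma card_row_le (n : ℕ) (b : ℤ) :
    ((board n).filter fun q => q.2 = b).card ≤ n := by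
  have h := card_filter_le_Icc_fst (n := n) (fun q => q.2 = b) 1 n
    (fun q hq _ => by rw [mem_board] at hq; simp [Finset.mem_Icc, hq.1, hq.2.1])
    (fun q₁ q₂ h₁ h₂ _ => by rw [h₁, h₂])
  omega

lemma card_col_le (n : ℕ) (a : ℤ) :
    ((board n).filter fun q => q.1 = a).card ≤ n := by
  have h := Finset.card_le_card_of_injOn (f := fun q : ℤ × ℤ => q.2)
      (s := (board n).filter fun q => q.1 = a) (t := Finset.Icc (1:ℤ) n)
      (by intro q hq
          simp only [Finset.mem_coe, Finset.mem_filter] at hq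
          rw [mem_board] at hq
          simp only [Finset.mem_coe, Finset.mem_Icc]
          exact ⟨hq.1.2.2.1, hq.1.2.2.2⟩)
      (by intro q₁ h₁ q₂ h₂ h
          simp only [Finset.coe_filter, Set.mem_setOf_eq] at h₁ h₂
          exact Prod.ext (h₁.2.trans h₂.2.symm) h)
  simpa [Int.card_Icc] using h

lemma card_pos_le (n : ℕ) (d : ℤ) :
    ((board n).filter fun q => q.1 - q.2 = d).card ≤ n := by
  have h := card_filter_le_Icc_fst (n := n) (fun q => q.1 - q.2 = d) 1 n
    (fun q hq _ => by rw [mem_board] at hq; simp [Finset.mem_Icc, hq.1, hq.2.1])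
    (fun q₁ q₂ h₁ h₂ h => by omega)
  omega

lemma card_neg_le (n : ℕ) (s : ℤ) :
    ((board n).filter fun q => q.1 + q.2 = s).card ≤ n := by
  have h := card_filter_le_Icc_fst (n := n) (fun q => q.1 + q.2 = s) 1 n
    (fun q hq _ => by rw [mem_board] at hq; simp [Finset.mem_Icc, hq.1, hq.2.1])
    (fun q₁ q₂ h₁ h₂ h => by omega)
  omega

lemma card_pos_le' (n : ℕ) (d : ℤ) :
    ((board n).filter fun q => q.1 - q.2 = d).card ≤ ((n : ℤ) - |d|).toNat := by
  have h := card_filter_le_Icc_fst (n := n) (fun q => q.1 - q.2 = d)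
    (max 1 (1 + d)) (min (n : ℤ) ((n : ℤ) + d))
    (fun q hq hP => by rw [mem_board] at hq; simp only [Finset.mem_Icc]; omega)
    (fun q₁ q₂ h₁ h₂ h => by omega)
  rcases le_total 0 d with hd | hd
  · rw [abs_of_nonneg hd]; omega
  · rw [abs_of_nonpos hd]; omega

lemma card_neg_le₁ (n : ℕ) (s : ℤ) :
    ((board n).filter fun q => q.1 + q.2 = s).card ≤ (s - 1).toNat := by
  have h := card_filter_le_Icc_fst (n := n) (fun q => q.1 + q.2 = s) 1 (s - 1)
    (fun q hq hP => by rw [mem_board] at hq; simp only [Finset.mem_Icc]; omega)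
    (fun q₁ q₂ h₁ h₂ h => by omega)
  omega

lemma card_neg_le₂ (n : ℕ) (s : ℤ) :
    ((board n).filter fun q => q.1 + q.2 = s).card ≤ (2 * (n : ℤ) + 1 - s).toNat := by
  have h := card_filter_le_Icc_fst (n := n) (fun q => q.1 + q.2 = s) (s - n) (n : ℤ)
    (fun q hq hP => by rw [mem_board] at hq; simp only [Finset.mem_Icc]; omega)
    (fun q₁ q₂ h₁ h₂ h => by omega)
  omega


lemma card_corner_prod {n : ℕ} (P : ℤ × ℤ → Prop) [DecidablePred P]
    (lo₁ hi₁ lo₂ hi₂ : ℤ)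
    (hmem : ∀ q ∈ board n, P q → q.1 ∈ Finset.Icc lo₁ hi₁ ∧ q.2 ∈ Finset.Icc lo₂ hi₂) :
    ((board n).filter P).card ≤ ((hi₁ + 1 - lo₁).toNat) * ((hi₂ + 1 - lo₂).toNat) := by
  have h : (board n).filter P ⊆ Finset.Icc lo₁ hi₁ ×ˢ Finset.Icc lo₂ hi₂ := by
    intro q hq
    simp only [Finset.mem_filter] at hq
    obtain ⟨h1, h2⟩ := hmem q hq.1 hq.2
    simp [Finset.mem_product, h1, h2]
  have := Finset.card_le_card h
  simpa [Finset.card_product, Int.card_Icc] using this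

lemma card_cornerBL (n t : ℕ) :
    ((board n).filter fun q => q.1 + q.2 ≤ (t : ℤ)).card ≤ t * t := by
  have h := card_corner_prod (n := n) (fun q => q.1 + q.2 ≤ (t : ℤ)) 1 t 1 t
    (fun q hq hP => by rw [mem_board] at hq; simp only [Finset.mem_Icc]; omega)
  have e : ((t : ℤ) + 1 - 1).toNat ≤ t := by omega
  calc ((board n).filter fun q => q.1 + q.2 ≤ (t : ℤ)).card
      ≤ _ := h
    _ ≤ t * t := Nat.mul_le_mul e e

lemma card_cornerTR (n t : ℕ) :
    ((board n).filter fun q => 2 * (n : ℤ) + 2 - t ≤ q.1 + q.2).card ≤ t * t := by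
  have h := card_corner_prod (n := n) (fun q => 2 * (n : ℤ) + 2 - t ≤ q.1 + q.2)
    ((n : ℤ) + 2 - t) n ((n : ℤ) + 2 - t) n
    (fun q hq hP => by rw [mem_board] at hq; simp only [Finset.mem_Icc]; omega)
  have e : ((n : ℤ) + 1 - ((n : ℤ) + 2 - t)).toNat ≤ t := by omega
  calc ((board n).filter fun q => 2 * (n : ℤ) + 2 - t ≤ q.1 + q.2).card
      ≤ _ := h
    _ ≤ t * t := Nat.mul_le_mul e e

lemma card_cornerBR (n t : ℕ) :
    ((board n).filter fun q => (n : ℤ) - t ≤ q.1 - q.2).card ≤ t * t := by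
  have h := card_corner_prod (n := n) (fun q => (n : ℤ) - t ≤ q.1 - q.2)
    ((n : ℤ) + 1 - t) n 1 t
    (fun q hq hP => by rw [mem_board] at hq; simp only [Finset.mem_Icc]; omega)
  have e1 : ((n : ℤ) + 1 - ((n : ℤ) + 1 - t)).toNat ≤ t := by omega
  have e2 : ((t : ℤ) + 1 - 1).toNat ≤ t := by omega
  calc ((board n).filter fun q => (n : ℤ) - t ≤ q.1 - q.2).card
      ≤ _ := h
    _ ≤ t * t := Nat.mul_le_mul e1 e2

lemma card_cornerTL (n t : ℕ) :
    ((board n).filter fun q => q.1 - q.2 ≤ (t : ℤ) - n).card ≤ t * t := by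
  have h := card_corner_prod (n := n) (fun q => q.1 - q.2 ≤ (t : ℤ) - n)
    1 t ((n : ℤ) + 1 - t) n
    (fun q hq hP => by rw [mem_board] at hq; simp only [Finset.mem_Icc]; omega)
  have e1 : ((t : ℤ) + 1 - 1).toNat ≤ t := by omega
  have e2 : ((n : ℤ) + 1 - ((n : ℤ) + 1 - t)).toNat ≤ t := by omega
  calc ((board n).filter fun q => q.1 - q.2 ≤ (t : ℤ) - n).card
      ≤ _ := h
    _ ≤ t * t := Nat.mul_le_mul e1 e2

/-- The master covering lemma. -/
lemma attacked_subset (n : ℕ) (S : Finset (ℤ × ℤ)) (R C D E : Finset ℤ) (t : ℕ)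
    (hR : ∀ p ∈ S, p.2 ∈ R) (hC : ∀ p ∈ S, p.1 ∈ C)
    (hD : ∀ p ∈ S, p.1 - p.2 ∈ D ∨ (n : ℤ) - t ≤ p.1 - p.2 ∨ p.1 - p.2 ≤ (t : ℤ) - n)
    (hE : ∀ p ∈ S, p.1 + p.2 ∈ E ∨ p.1 + p.2 ≤ (t : ℤ) ∨ 2 * (n : ℤ) + 2 - t ≤ p.1 + p.2) :
    attacked n S ⊆
      (R.biUnion fun b => (board n).filter fun q => q.2 = b) ∪
      (C.biUnion fun a => (board n).filter fun q => q.1 = a) ∪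
      (D.biUnion fun d => (board n).filter fun q => q.1 - q.2 = d) ∪
      (E.biUnion fun s => (board n).filter fun q => q.1 + q.2 = s) ∪
      ((board n).filter fun q => (n : ℤ) - t ≤ q.1 - q.2) ∪
      ((board n).filter fun q => q.1 - q.2 ≤ (t : ℤ) - n) ∪
      ((board n).filter fun q => q.1 + q.2 ≤ (t : ℤ)) ∪
      ((board n).filter fun q => 2 * (n : ℤ) + 2 - t ≤ q.1 + q.2) := by
  intro q hq
  simp only [attacked, Finset.mem_biUnion, Finset.mem_filter] at hq
  obtain ⟨p, hp, hqb, hne, hrel⟩ := hq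
  rcases hrel with h | h | h | h
  · exact Finset.mem_union_left _ (Finset.mem_union_left _ (Finset.mem_union_left _ (Finset.mem_union_left _ (Finset.mem_union_left _ (Finset.mem_union_left _ (Finset.mem_union_right _ (Finset.mem_biUnion.mpr ⟨p.1, hC p hp, Finset.mem_filter.mpr ⟨hqb, h.symm⟩⟩)))))))
  · exact Finset.mem_union_left _ (Finset.mem_union_left _ (Finset.mem_union_left _ (Finset.mem_union_left _ (Finset.mem_union_left _ (Finset.mem_union_left _ (Finset.mem_union_left _ (Finset.mem_biUnion.mpr ⟨p.2, hR p hp, Finset.mem_filter.mpr ⟨hqb, h.symm⟩⟩)))))))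
  · rcases hD p hp with hd | hd | hd
    · exact Finset.mem_union_left _ (Finset.mem_union_left _ (Finset.mem_union_left _ (Finset.mem_union_left _ (Finset.mem_union_left _ (Finset.mem_union_right _ (Finset.mem_biUnion.mpr ⟨p.1 - p.2, hd, Finset.mem_filter.mpr ⟨hqb, h.symm⟩⟩))))))
    · exact Finset.mem_union_left _ (Finset.mem_union_left _ (Finset.mem_union_left _ (Finset.mem_union_right _ (Finset.mem_filter.mpr ⟨hqb, by omega⟩))))
    · exact Finset.mem_union_left _ (Finset.mem_union_left _ (Finset.mem_union_right _ (Finset.mem_filter.mpr ⟨hqb, by omega⟩)))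
  · rcases hE p hp with hs | hs | hs
    · exact Finset.mem_union_left _ (Finset.mem_union_left _ (Finset.mem_union_left _ (Finset.mem_union_left _ (Finset.mem_union_right _ (Finset.mem_biUnion.mpr ⟨p.1 + p.2, hs, Finset.mem_filter.mpr ⟨hqb, h.symm⟩⟩)))))
    · exact Finset.mem_union_left _ (Finset.mem_union_right _ (Finset.mem_filter.mpr ⟨hqb, by omega⟩))
    · exact Finset.mem_union_right _ (Finset.mem_filter.mpr ⟨hqb, by omega⟩)

lemma biUnion_card_le_row (n : ℕ) (R : Finset ℤ) :
    (R.biUnion fun b => (board n).filter fun q => q.2 = b).card ≤ R.card * n := by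
  calc (R.biUnion fun b => (board n).filter fun q => q.2 = b).card
      ≤ ∑ b ∈ R, ((board n).filter fun q => q.2 = b).card := Finset.card_biUnion_le
    _ ≤ ∑ _b ∈ R, n := Finset.sum_le_sum fun b _ => card_row_le n b
    _ = R.card * n := by simp [Finset.sum_const, Nat.smul_one_eq_cast]

lemma biUnion_card_le_col (n : ℕ) (C : Finset ℤ) :
    (C.biUnion fun a => (board n).filter fun q => q.1 = a).card ≤ C.card * n := by
  calc (C.biUnion fun a => (board n).filter fun q => q.1 = a).card
      ≤ ∑ a ∈ C, ((board n).filter fun q => q.1 = a).card := Finset.card_biUnion_le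
    _ ≤ ∑ _a ∈ C, n := Finset.sum_le_sum fun a _ => card_col_le n a
    _ = C.card * n := by simp [Finset.sum_const, Nat.smul_one_eq_cast]

lemma biUnion_card_le_pos (n : ℕ) (D : Finset ℤ) :
    (D.biUnion fun d => (board n).filter fun q => q.1 - q.2 = d).card ≤ D.card * n := by
  calc (D.biUnion fun d => (board n).filter fun q => q.1 - q.2 = d).card
      ≤ ∑ d ∈ D, ((board n).filter fun q => q.1 - q.2 = d).card := Finset.card_biUnion_le
    _ ≤ ∑ _d ∈ D, n := Finset.sum_le_sum fun d _ => card_pos_le n d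
    _ = D.card * n := by simp [Finset.sum_const, Nat.smul_one_eq_cast]

lemma biUnion_card_le_neg (n : ℕ) (E : Finset ℤ) :
    (E.biUnion fun s => (board n).filter fun q => q.1 + q.2 = s).card ≤ E.card * n := by
  calc (E.biUnion fun s => (board n).filter fun q => q.1 + q.2 = s).card
      ≤ ∑ s ∈ E, ((board n).filter fun q => q.1 + q.2 = s).card := Finset.card_biUnion_le
    _ ≤ ∑ _s ∈ E, n := Finset.sum_le_sum fun s _ => card_neg_le n s
    _ = E.card * n := by simp [Finset.sum_const, Nat.smul_one_eq_cast]

/-- Master numeric bound. -/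
lemma attacked_card_le (n : ℕ) (S : Finset (ℤ × ℤ)) (R C D E : Finset ℤ) (t L : ℕ)
    (hR : ∀ p ∈ S, p.2 ∈ R) (hC : ∀ p ∈ S, p.1 ∈ C)
    (hD : ∀ p ∈ S, p.1 - p.2 ∈ D ∨ (n : ℤ) - t ≤ p.1 - p.2 ∨ p.1 - p.2 ≤ (t : ℤ) - n)
    (hE : ∀ p ∈ S, p.1 + p.2 ∈ E ∨ p.1 + p.2 ≤ (t : ℤ) ∨ 2 * (n : ℤ) + 2 - t ≤ p.1 + p.2)
    (hL : R.card + C.card + D.card + E.card ≤ L) :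
    (attacked n S).card ≤ L * n + 4 * (t * t) := by
  have h1 := Finset.card_le_card (attacked_subset n S R C D E t hR hC hD hE)
  have h2 := biUnion_card_le_row n R
  have h3 := biUnion_card_le_col n C
  have h4 := biUnion_card_le_pos n D
  have h5 := biUnion_card_le_neg n E
  have h6 := card_cornerBR n t
  have h7 := card_cornerTL n t
  have h8 := card_cornerBL n t
  have h9 := card_cornerTR n t
  have hu : ∀ A B : Finset (ℤ × ℤ), (A ∪ B).card ≤ A.card + B.card :=
    fun A B => Finset.card_union_le A B
  calc (attacked n S).card ≤ _ := h1
    _ ≤ _ := hu _ _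
    _ ≤ _ + _ := Nat.add_le_add (hu _ _) le_rfl
    _ ≤ (_ + _) + _ + _ := Nat.add_le_add (Nat.add_le_add (hu _ _) le_rfl) le_rfl
    _ ≤ ((_ + _) + _) + _ + _ :=
        Nat.add_le_add (Nat.add_le_add (Nat.add_le_add (hu _ _) le_rfl) le_rfl) le_rfl
    _ ≤ (((_ + _) + _) + _) + _ + _ :=
        Nat.add_le_add (Nat.add_le_add (Nat.add_le_add (Nat.add_le_add (hu _ _) le_rfl) le_rfl) le_rfl) le_rfl
    _ ≤ ((((_ + _) + _) + _) + _) + _ + _ :=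
        Nat.add_le_add (Nat.add_le_add (Nat.add_le_add (Nat.add_le_add (Nat.add_le_add (hu _ _) le_rfl) le_rfl) le_rfl) le_rfl) le_rfl
    _ ≤ (((((_ + _) + _) + _) + _) + _) + _ + _ :=
        Nat.add_le_add (Nat.add_le_add (Nat.add_le_add (Nat.add_le_add (Nat.add_le_add (Nat.add_le_add (hu _ _) le_rfl) le_rfl) le_rfl) le_rfl) le_rfl) le_rfl
    _ ≤ L * n + 4 * (t * t) := by
        have := Nat.add_le_add (Nat.add_le_add (Nat.add_le_add (Nat.add_le_add
          (Nat.add_le_add (Nat.add_le_add (Nat.add_le_add h2 h3) h4) h5) h6) h7) h8) h9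
        have hmul : (R.card + C.card + D.card + E.card) * n ≤ L * n :=
          Nat.mul_le_mul_right n hL
        nlinarith [this, hmul]


/-! ### Diagonal segments and hexagonal clusters -/

noncomputable def seg (d lo hi : ℤ) : Finset (ℤ × ℤ) := (Finset.Icc lo hi).image fun x => (x, x - d)

lemma mem_seg {d lo hi : ℤ} {p : ℤ × ℤ} :
    p ∈ seg d lo hi ↔ lo ≤ p.1 ∧ p.1 ≤ hi ∧ p.2 = p.1 - d := by
  simp only [seg, Finset.mem_image, Finset.mem_Icc]
  constructor
  · rintro ⟨x, ⟨hx1, hx2⟩, rfl⟩; exact ⟨hx1, hx2, rfl⟩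
  · rintro ⟨h1, h2, h3⟩
    exact ⟨p.1, ⟨h1, h2⟩, by rw [← h3]⟩

lemma card_seg (d lo hi : ℤ) : (seg d lo hi).card = (hi + 1 - lo).toNat := by
  rw [seg, Finset.card_image_of_injective _ (fun x y hxy => by
    simpa using congrArg Prod.fst hxy), Int.card_Icc]

/-- The hexagonal cluster: for `i < h+1` the diagonal `x - y = h - i` with
`x ∈ [1 + (h-i), a]`; for `i < l` the diagonal `x - y = -(l - i)` with
`x ∈ [1, b - l + i]`. -/
noncomputable def hexA (a b l h : ℕ) : Finset (ℤ × ℤ) :=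
  ((Finset.range (h + 1)).biUnion fun i =>
      seg ((h : ℤ) - i) (1 + ((h : ℤ) - i)) a) ∪
  ((Finset.range l).biUnion fun i =>
      seg (-(l : ℤ) + i) 1 ((b : ℤ) - l + i))

lemma mem_hexA {a b l h : ℕ} (hab : a ≤ b) (hba : b ≤ a + 1) {p : ℤ × ℤ}
    (hp : p ∈ hexA a b l h) :
    1 ≤ p.1 ∧ p.1 ≤ (a : ℤ) ∧ 1 ≤ p.2 ∧ p.2 ≤ (b : ℤ) ∧
      -(l : ℤ) ≤ p.1 - p.2 ∧ p.1 - p.2 ≤ (h : ℤ) := by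
  simp only [hexA, Finset.mem_union, Finset.mem_biUnion, Finset.mem_range, mem_seg] at hp
  rcases hp with ⟨i, hi, h1, h2, h3⟩ | ⟨i, hi, h1, h2, h3⟩ <;> omega

lemma hexA_card (a b l h : ℕ) (h1 : h + 1 ≤ a) (h2 : l ≤ b) :
    (hexA a b l h).card =
      (∑ i ∈ Finset.range (h + 1), (a - h + i)) +
      (∑ i ∈ Finset.range l, (b - l + i)) := by
  have disj : Disjoint
      ((Finset.range (h + 1)).biUnion fun i =>
        seg ((h : ℤ) - i) (1 + ((h : ℤ) - i)) a)
      ((Finset.range l).biUnion fun i =>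
        seg (-(l : ℤ) + i) 1 ((b : ℤ) - l + i)) := by
    rw [Finset.disjoint_left]
    intro p hp hp'
    simp only [Finset.mem_biUnion, Finset.mem_range, mem_seg] at hp hp'
    obtain ⟨i, hi, _, _, e⟩ := hp
    obtain ⟨j, hj, _, _, e'⟩ := hp'
    have hi' : (i : ℤ) < h + 1 := by exact_mod_cast hi
    have hj' : (j : ℤ) < l := by exact_mod_cast hj
    omega
  rw [hexA, Finset.card_union_of_disjoint disj]
  congr 1
  · rw [Finset.card_biUnion]
    · apply Finset.sum_congr rfl
      intro i hi
      simp only [Finset.mem_range] at hi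
      rw [card_seg]
      omega
    · intro i hi j hj hij
      simp only [Function.onFun]
      rw [Finset.disjoint_left]
      intro p hp hp'
      rw [mem_seg] at hp hp'
      apply hij
      have : (i : ℤ) = j := by omega
      exact_mod_cast this
  · rw [Finset.card_biUnion]
    · apply Finset.sum_congr rfl
      intro i hi
      simp only [Finset.mem_range] at hi
      rw [card_seg]
      omega
    · intro i hi j hj hij
      simp only [Function.onFun]
      rw [Finset.disjoint_left]
      intro p hp hp'
      rw [mem_seg] at hp hp'
      apply hij
      have : (i : ℤ) = j := by omega
      exact_mod_cast this

lemma sum_shift (k c : ℕ) :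
    2 * (∑ i ∈ Finset.range k, (c + i)) = k * (2 * c + k - 1) := by
  rw [Finset.sum_add_distrib, Finset.sum_const, Finset.card_range, smul_eq_mul]
  have g := Finset.sum_range_id_mul_two k
  cases k with
  | zero => simp
  | succ k =>
      have e : 2 * c + (k + 1) - 1 = 2 * c + k := by omega
      rw [e]
      have g' : (∑ i ∈ Finset.range (k + 1), i) * 2 = (k + 1) * k := by
        simpa using g
      nlinarith [g']


lemma attacked_mono {n : ℕ} {S T : Finset (ℤ × ℤ)} (h : S ⊆ T) :
    attacked n S ⊆ attacked n T := by
  apply Finset.biUnion_subset_biUnion_of_subset_left _ h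

/-- Generic single-corner hexagon construction. -/
lemma generic_construction (m n a b l h : ℕ)
    (h1 : h + 1 ≤ a) (h2 : l + 1 ≤ b) (hab : a ≤ b) (hba : b ≤ a + 1)
    (hsum : a + b + (l + h + 1) ≤ m) (hbn : b ≤ n) :
    ∃ S : Finset (ℤ × ℤ), S ⊆ board n ∧
      2 * S.card = (h + 1) * (2 * (a - h) + h) + l * (2 * (b - l) + l - 1) ∧
      (attacked n S).card ≤ m * n + 100 * (m * m) := by
  refine ⟨hexA a b l h, ?_, ?_, ?_⟩
  · intro p hp
    have := mem_hexA hab hba hp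
    rw [mem_board]
    refine ⟨this.1, le_trans this.2.1 ?_, this.2.2.1, le_trans this.2.2.2.1 ?_⟩ <;>
      exact_mod_cast Nat.cast_le.mpr (by omega)
  · rw [hexA_card a b l h h1 (by omega), Nat.mul_add, sum_shift, sum_shift]
    have e : 2 * (a - h) + (h + 1) - 1 = 2 * (a - h) + h := by omega
    rw [e]
  · have hbound := attacked_card_le n (hexA a b l h)
      (Finset.Icc 1 (b : ℤ)) (Finset.Icc 1 (a : ℤ))
      (Finset.Icc (-(l : ℤ)) (h : ℤ)) (∅ : Finset ℤ) (a + b) m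
      (fun p hp => by
        have := mem_hexA hab hba hp
        simp only [Finset.mem_Icc]
        exact ⟨this.2.2.1, this.2.2.2.1⟩)
      (fun p hp => by
        have := mem_hexA hab hba hp
        simp only [Finset.mem_Icc]
        exact ⟨this.1, this.2.1⟩)
      (fun p hp => by
        have := mem_hexA hab hba hp
        exact Or.inl (by simp only [Finset.mem_Icc]; exact ⟨this.2.2.2.2.1, this.2.2.2.2.2⟩))
      (fun p hp => by
        have := mem_hexA hab hba hp
        refine Or.inr (Or.inl ?_)
        push_cast
        omega)
      (by
        simp only [Int.card_Icc, Finset.card_empty]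
        omega)
    refine le_trans hbound ?_
    have hab2 : a + b ≤ m := by omega
    have : 4 * ((a + b) * (a + b)) ≤ 100 * (m * m) := by
      have := Nat.mul_le_mul hab2 hab2
      nlinarith
    omega

/-- Four-corner construction for `m ≡ 6 (mod 12)`. -/
lemma four_corner_construction (m n v : ℕ) (hm : m = 12 * v + 6) (hn : 8 * v + 8 ≤ n) :
    ∃ S : Finset (ℤ × ℤ), S ⊆ board n ∧
      S.card = 4 * (3 * (v * v) + 3 * v + 1) ∧
      (attacked n S).card ≤ m * n + 100 * (m * m) := by
  set a : ℕ := 2 * v + 1 with ha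
  set BL := hexA a a v v with hBLdef
  set BR := BL.image (fun p : ℤ × ℤ => ((n : ℤ) + 1 - p.1, p.2)) with hBRdef
  set TL := BL.image (fun p : ℤ × ℤ => (p.1, (n : ℤ) + 1 - p.2)) with hTLdef
  set TR := BL.image (fun p : ℤ × ℤ => ((n : ℤ) + 1 - p.1, (n : ℤ) + 1 - p.2)) with hTRdef
  have hmemBL : ∀ p ∈ BL, 1 ≤ p.1 ∧ p.1 ≤ (a : ℤ) ∧ 1 ≤ p.2 ∧ p.2 ≤ (a : ℤ) ∧
      -(v : ℤ) ≤ p.1 - p.2 ∧ p.1 - p.2 ≤ (v : ℤ) := fun p hp => mem_hexA le_rfl (by omega) hp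
  have hmemBR : ∀ p ∈ BR, (n : ℤ) + 1 - a ≤ p.1 ∧ p.1 ≤ n ∧ 1 ≤ p.2 ∧ p.2 ≤ (a : ℤ) ∧
      (n : ℤ) + 1 - 2 * a ≤ p.1 - p.2 ∧ p.1 - p.2 ≤ (n : ℤ) - 1 ∧
      (n : ℤ) + 1 - v ≤ p.1 + p.2 ∧ p.1 + p.2 ≤ (n : ℤ) + 1 + v := by
    intro p hp
    rw [hBRdef, Finset.mem_image] at hp
    obtain ⟨q, hq, rfl⟩ := hp
    obtain ⟨e1, e2, e3, e4, e5, e6⟩ := hmemBL q hq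
    constructor <;> simp <;> omega
  have hmemTL : ∀ p ∈ TL, 1 ≤ p.1 ∧ p.1 ≤ (a : ℤ) ∧ (n : ℤ) + 1 - a ≤ p.2 ∧ p.2 ≤ n ∧
      1 - (n : ℤ) ≤ p.1 - p.2 ∧ p.1 - p.2 ≤ 2 * a - 1 - (n : ℤ) ∧
      (n : ℤ) + 1 - v ≤ p.1 + p.2 ∧ p.1 + p.2 ≤ (n : ℤ) + 1 + v := by
    intro p hp
    rw [hTLdef, Finset.mem_image] at hp
    obtain ⟨q, hq, rfl⟩ := hp
    obtain ⟨e1, e2, e3, e4, e5, e6⟩ := hmemBL q hq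
    constructor <;> simp <;> omega
  have hmemTR : ∀ p ∈ TR, (n : ℤ) + 1 - a ≤ p.1 ∧ p.1 ≤ n ∧ (n : ℤ) + 1 - a ≤ p.2 ∧
      p.2 ≤ n ∧ -(v : ℤ) ≤ p.1 - p.2 ∧ p.1 - p.2 ≤ (v : ℤ) ∧
      2 * (n : ℤ) + 2 - 2 * a ≤ p.1 + p.2 := by
    intro p hp
    rw [hTRdef, Finset.mem_image] at hp
    obtain ⟨q, hq, rfl⟩ := hp
    obtain ⟨e1, e2, e3, e4, e5, e6⟩ := hmemBL q hq
    constructor <;> simp <;> omega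
  have hBLcard : BL.card = 3 * (v * v) + 3 * v + 1 := by
    have h2 : 2 * BL.card = (v + 1) * (2 * (a - v) + v) + v * (2 * (a - v) + v - 1) := by
      rw [hBLdef, hexA_card a a v v (by omega) (by omega), Nat.mul_add, sum_shift, sum_shift]
      have e : 2 * (a - v) + (v + 1) - 1 = 2 * (a - v) + v := by omega
      rw [e]
    have e1 : a - v = v + 1 := by omega
    rw [e1] at h2
    have e2 : 2 * (v + 1) + v - 1 = 3 * v + 1 := by omega
    rw [e2] at h2
    have e3 : (v + 1) * (2 * (v + 1) + v) + v * (3 * v + 1) = 2 * (3 * (v * v) + 3 * v + 1) := by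
      ring
    omega
  -- injectivity of the three reflections
  have hBRcard : BR.card = BL.card := by
    rw [hBRdef]
    apply Finset.card_image_of_injective
    intro p q hpq
    have h1 := congrArg Prod.fst hpq
    have h2 := congrArg Prod.snd hpq
    simp at h1 h2
    exact Prod.ext (by omega) h2
  have hTLcard : TL.card = BL.card := by
    rw [hTLdef]
    apply Finset.card_image_of_injective
    intro p q hpq
    have h1 := congrArg Prod.fst hpq
    have h2 := congrArg Prod.snd hpq
    simp at h1 h2
    exact Prod.ext h1 (by omega)
  have hTRcard : TR.card = BL.card := by
    rw [hTRdef]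
    apply Finset.card_image_of_injective
    intro p q hpq
    have h1 := congrArg Prod.fst hpq
    have h2 := congrArg Prod.snd hpq
    simp at h1 h2
    exact Prod.ext (by omega) (by omega)
  have han : (a : ℤ) < (n : ℤ) + 1 - a := by
    have : (8 * v + 8 : ℤ) ≤ (n : ℤ) := by exact_mod_cast hn
    omega
  refine ⟨BL ∪ BR ∪ TL ∪ TR, ?_, ?_, ?_⟩
  · intro p hp
    rw [mem_board]
    have hna : (a : ℤ) ≤ n := by omega
    simp only [Finset.mem_union] at hp
    rcases hp with ((h | h) | h) | h
    · obtain ⟨e1, e2, e3, e4, _, _⟩ := hmemBL p h; omega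
    · obtain ⟨e1, e2, e3, e4, _⟩ := hmemBR p h; omega
    · obtain ⟨e1, e2, e3, e4, _⟩ := hmemTL p h; omega
    · obtain ⟨e1, e2, e3, e4, _⟩ := hmemTR p h; omega
  · have d1 : Disjoint BL BR := by
      rw [Finset.disjoint_left]
      intro p hp hp'
      have := (hmemBL p hp).2.1
      have := (hmemBR p hp').1
      omega
    have d2 : Disjoint (BL ∪ BR) TL := by
      rw [Finset.disjoint_left]
      intro p hp hp'
      have h2 := (hmemTL p hp').2.2.1
      rcases Finset.mem_union.mp hp with h | h
      · have := (hmemBL p h).2.2.2.1; omega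
      · have := (hmemBR p h).2.2.2.1; omega
    have d3 : Disjoint (BL ∪ BR ∪ TL) TR := by
      rw [Finset.disjoint_left]
      intro p hp hp'
      have h1 := (hmemTR p hp').1
      have h2 := (hmemTR p hp').2.2.1
      rcases Finset.mem_union.mp hp with h | h
      · rcases Finset.mem_union.mp h with h' | h'
        · have := (hmemBL p h').2.1; omega
        · have := (hmemBR p h').2.2.2.1; omega
      · have := (hmemTL p h).2.1; omega
    rw [Finset.card_union_of_disjoint d3, Finset.card_union_of_disjoint d2,
      Finset.card_union_of_disjoint d1, hBRcard, hTLcard, hTRcard, hBLcard]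
    ring
  · have hbound := attacked_card_le n (BL ∪ BR ∪ TL ∪ TR)
      (Finset.Icc 1 (a : ℤ) ∪ Finset.Icc ((n : ℤ) + 1 - a) (n : ℤ))
      (Finset.Icc 1 (a : ℤ) ∪ Finset.Icc ((n : ℤ) + 1 - a) (n : ℤ))
      (Finset.Icc (-(v : ℤ)) (v : ℤ))
      (Finset.Icc ((n : ℤ) + 1 - v) ((n : ℤ) + 1 + v))
      (2 * a) m
      (fun p hp => by
        simp only [Finset.mem_union, Finset.mem_Icc] at hp ⊢
        rcases hp with ((h | h) | h) | h
        · obtain ⟨_, _, e3, e4, _, _⟩ := hmemBL p h; exact Or.inl ⟨e3, e4⟩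
        · obtain ⟨_, _, e3, e4, _⟩ := hmemBR p h; exact Or.inl ⟨e3, e4⟩
        · obtain ⟨_, _, e3, e4, _⟩ := hmemTL p h; exact Or.inr ⟨e3, e4⟩
        · obtain ⟨_, _, e3, e4, _⟩ := hmemTR p h; exact Or.inr ⟨e3, e4⟩)
      (fun p hp => by
        simp only [Finset.mem_union, Finset.mem_Icc] at hp ⊢
        rcases hp with ((h | h) | h) | h
        · obtain ⟨e1, e2, _⟩ := hmemBL p h; exact Or.inl ⟨e1, e2⟩
        · obtain ⟨e1, e2, _⟩ := hmemBR p h; exact Or.inr ⟨e1, e2⟩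
        · obtain ⟨e1, e2, _⟩ := hmemTL p h; exact Or.inl ⟨e1, e2⟩
        · obtain ⟨e1, e2, _⟩ := hmemTR p h; exact Or.inr ⟨e1, e2⟩)
      (fun p hp => by
        simp only [Finset.mem_union, Finset.mem_Icc] at hp
        rcases hp with ((h | h) | h) | h
        · obtain ⟨_, _, _, _, e5, e6⟩ := hmemBL p h
          exact Or.inl (by simp only [Finset.mem_Icc]; exact ⟨e5, e6⟩)
        · obtain ⟨_, _, _, _, e5, e6, _⟩ := hmemBR p h
          refine Or.inr (Or.inl ?_); push_cast; omega
        · obtain ⟨_, _, _, _, e5, e6, _⟩ := hmemTL p h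
          refine Or.inr (Or.inr ?_); push_cast; omega
        · obtain ⟨_, _, _, _, e5, e6, _⟩ := hmemTR p h
          exact Or.inl (by simp only [Finset.mem_Icc]; exact ⟨e5, e6⟩))
      (fun p hp => by
        simp only [Finset.mem_union, Finset.mem_Icc] at hp
        rcases hp with ((h | h) | h) | h
        · obtain ⟨e1, e2, e3, e4, _⟩ := hmemBL p h
          refine Or.inr (Or.inl ?_); push_cast; omega
        · obtain ⟨_, _, _, _, _, _, e7, e8⟩ := hmemBR p h
          exact Or.inl (by simp only [Finset.mem_Icc]; exact ⟨e7, e8⟩)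
        · obtain ⟨_, _, _, _, _, _, e7, e8⟩ := hmemTL p h
          exact Or.inl (by simp only [Finset.mem_Icc]; exact ⟨e7, e8⟩)
        · obtain ⟨_, _, _, _, _, _, e7⟩ := hmemTR p h
          refine Or.inr (Or.inr ?_); push_cast; omega)
      (by
        have hc1 : (Finset.Icc 1 (a : ℤ) ∪ Finset.Icc ((n : ℤ) + 1 - a) (n : ℤ)).card ≤ 2 * a := by
          refine le_trans (Finset.card_union_le _ _) ?_
          simp only [Int.card_Icc]
          omega
        have hc2 : (Finset.Icc (-(v : ℤ)) (v : ℤ)).card = 2 * v + 1 := by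
          rw [Int.card_Icc]; omega
        have hc3 : (Finset.Icc ((n : ℤ) + 1 - v) ((n : ℤ) + 1 + v)).card = 2 * v + 1 := by
          rw [Int.card_Icc]; omega
        omega)
    refine le_trans hbound ?_
    have h2a : 2 * a ≤ m := by omega
    have : 4 * ((2 * a) * (2 * a)) ≤ 100 * (m * m) := by
      have := Nat.mul_le_mul h2a h2a
      nlinarith
    omega

/-- Variant of the master bound with per-family card bounds. -/
lemma attacked_card_le_parts (n : ℕ) (S : Finset (ℤ × ℤ)) (R C D E : Finset ℤ) (t : ℕ)
    (hR : ∀ p ∈ S, p.2 ∈ R) (hC : ∀ p ∈ S, p.1 ∈ C)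
    (hD : ∀ p ∈ S, p.1 - p.2 ∈ D ∨ (n : ℤ) - t ≤ p.1 - p.2 ∨ p.1 - p.2 ≤ (t : ℤ) - n)
    (hE : ∀ p ∈ S, p.1 + p.2 ∈ E ∨ p.1 + p.2 ≤ (t : ℤ) ∨ 2 * (n : ℤ) + 2 - t ≤ p.1 + p.2)
    (bR bC bD bE : ℕ)
    (h2 : (R.biUnion fun b => (board n).filter fun q => q.2 = b).card ≤ bR)
    (h3 : (C.biUnion fun a => (board n).filter fun q => q.1 = a).card ≤ bC)
    (h4 : (D.biUnion fun d => (board n).filter fun q => q.1 - q.2 = d).card ≤ bD)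
    (h5 : (E.biUnion fun s => (board n).filter fun q => q.1 + q.2 = s).card ≤ bE) :
    (attacked n S).card ≤ bR + bC + bD + bE + 4 * (t * t) := by
  have h1 := Finset.card_le_card (attacked_subset n S R C D E t hR hC hD hE)
  have h6 := card_cornerBR n t
  have h7 := card_cornerTL n t
  have h8 := card_cornerBL n t
  have h9 := card_cornerTR n t
  have hu : ∀ A B : Finset (ℤ × ℤ), (A ∪ B).card ≤ A.card + B.card :=
    fun A B => Finset.card_union_le A B
  calc (attacked n S).card ≤ _ := h1
    _ ≤ _ := hu _ _
    _ ≤ _ + _ := Nat.add_le_add (hu _ _) le_rfl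
    _ ≤ (_ + _) + _ + _ := Nat.add_le_add (Nat.add_le_add (hu _ _) le_rfl) le_rfl
    _ ≤ ((_ + _) + _) + _ + _ :=
        Nat.add_le_add (Nat.add_le_add (Nat.add_le_add (hu _ _) le_rfl) le_rfl) le_rfl
    _ ≤ (((_ + _) + _) + _) + _ + _ :=
        Nat.add_le_add (Nat.add_le_add (Nat.add_le_add (Nat.add_le_add (hu _ _) le_rfl) le_rfl) le_rfl) le_rfl
    _ ≤ ((((_ + _) + _) + _) + _) + _ + _ :=
        Nat.add_le_add (Nat.add_le_add (Nat.add_le_add (Nat.add_le_add (Nat.add_le_add (hu _ _) le_rfl) le_rfl) le_rfl) le_rfl) le_rfl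
    _ ≤ (((((_ + _) + _) + _) + _) + _) + _ + _ :=
        Nat.add_le_add (Nat.add_le_add (Nat.add_le_add (Nat.add_le_add (Nat.add_le_add (Nat.add_le_add (hu _ _) le_rfl) le_rfl) le_rfl) le_rfl) le_rfl) le_rfl
    _ ≤ bR + bC + bD + bE + 4 * (t * t) := by
        have := Nat.add_le_add (Nat.add_le_add (Nat.add_le_add (Nat.add_le_add
          (Nat.add_le_add (Nat.add_le_add (Nat.add_le_add h2 h3) h4) h5) h6) h7) h8) h9
        omega

lemma triple_biUnion_card_le (n : ℕ) (f : ℤ → Finset (ℤ × ℤ)) (d₁ d₂ d₃ : ℤ) :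
    (({d₁, d₂, d₃} : Finset ℤ).biUnion f).card ≤ (f d₁).card + (f d₂).card + (f d₃).card := by
  have hsub : ({d₁, d₂, d₃} : Finset ℤ).biUnion f ⊆ f d₁ ∪ f d₂ ∪ f d₃ := by
    intro q hq
    simp only [Finset.mem_biUnion, Finset.mem_insert, Finset.mem_singleton] at hq
    obtain ⟨d, hd, hqd⟩ := hq
    simp only [Finset.mem_union]
    rcases hd with rfl | rfl | rfl
    · exact Or.inl (Or.inl hqd)
    · exact Or.inl (Or.inr hqd)
    · exact Or.inr hqd
  refine le_trans (Finset.card_le_card hsub) ?_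
  refine le_trans (Finset.card_union_le _ _) ?_
  have := Finset.card_union_le (f d₁) (f d₂)
  omega

/-- The 3×3 grid construction for m = 10. -/
lemma m10_construction (n : ℕ) (hn : 24 ≤ n) :
    ∃ S : Finset (ℤ × ℤ), S ⊆ board n ∧ S.card = 9 ∧
      (attacked n S).card ≤ 10 * n + 100 * (10 * 10) := by
  set M : ℕ := n / 2 with hMdef
  have hM1 : 2 * M ≤ n := by omega
  have hM2 : n ≤ 2 * M + 1 := by omega
  have hM3 : 12 ≤ M := by omega
  set g : Finset ℤ := {2, (M : ℤ) + 1, 2 * (M : ℤ)} with hg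
  have hgcard : g.card = 3 := by
    rw [hg]
    rw [Finset.card_insert_of_notMem (by simp; omega),
      Finset.card_insert_of_notMem (by simp; omega), Finset.card_singleton]
  have hgmem : ∀ x ∈ g, x = 2 ∨ x = (M : ℤ) + 1 ∨ x = 2 * (M : ℤ) := by
    intro x hx
    simpa [hg] using hx
  refine ⟨g ×ˢ g, ?_, ?_, ?_⟩
  · intro p hp
    rw [Finset.mem_product] at hp
    rw [mem_board]
    have h1 := hgmem _ hp.1
    have h2 := hgmem _ hp.2
    have hn' : (24 : ℤ) ≤ n := by exact_mod_cast hn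
    have hM1' : 2 * (M : ℤ) ≤ n := by exact_mod_cast hM1
    rcases h1 with e | e | e <;> rcases h2 with e2 | e2 | e2 <;> omega
  · rw [Finset.card_product, hgcard]
  · have hbound := attacked_card_le_parts n (g ×ˢ g) g g
      ({0, (M : ℤ) - 1, 1 - (M : ℤ)}) ({(M : ℤ) + 3, 2 * (M : ℤ) + 2, 3 * (M : ℤ) + 1}) 4
      (fun p hp => (Finset.mem_product.mp hp).2)
      (fun p hp => (Finset.mem_product.mp hp).1)
      (fun p hp => by
        rw [Finset.mem_product] at hp
        have h1 := hgmem _ hp.1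
        have h2 := hgmem _ hp.2
        have hM1' : 2 * (M : ℤ) ≤ n := by exact_mod_cast hM1
        have hM2' : (n : ℤ) ≤ 2 * M + 1 := by exact_mod_cast hM2
        have hM3' : (12 : ℤ) ≤ M := by exact_mod_cast hM3
        simp only [Finset.mem_insert, Finset.mem_singleton]
        rcases h1 with e1 | e1 | e1 <;> rcases h2 with e2 | e2 | e2 <;> rw [e1, e2] <;> omega
      )
      (fun p hp => by
        rw [Finset.mem_product] at hp
        have h1 := hgmem _ hp.1
        have h2 := hgmem _ hp.2
        have hM1' : 2 * (M : ℤ) ≤ n := by exact_mod_cast hM1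
        have hM2' : (n : ℤ) ≤ 2 * M + 1 := by exact_mod_cast hM2
        have hM3' : (12 : ℤ) ≤ M := by exact_mod_cast hM3
        simp only [Finset.mem_insert, Finset.mem_singleton]
        rcases h1 with e1 | e1 | e1 <;> rcases h2 with e2 | e2 | e2 <;> rw [e1, e2] <;> omega
      )
      (3 * n) (3 * n) (n + 2 * (M + 2)) (n + 2 * (M + 2))
      (le_trans (biUnion_card_le_row n g) (by rw [hgcard]))
      (le_trans (biUnion_card_le_col n g) (by rw [hgcard]))
      (by
        refine le_trans (triple_biUnion_card_le n _ 0 ((M : ℤ) - 1) (1 - (M : ℤ))) ?_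
        have b1 := card_pos_le n 0
        have b2 := card_pos_le' n ((M : ℤ) - 1)
        have b3 := card_pos_le' n (1 - (M : ℤ))
        have e2 : |(M : ℤ) - 1| = (M : ℤ) - 1 := abs_of_nonneg (by
          have : (12 : ℤ) ≤ M := by exact_mod_cast hM3
          omega)
        have e3 : |1 - (M : ℤ)| = (M : ℤ) - 1 := by
          rw [abs_sub_comm, e2]
        rw [e2] at b2
        rw [e3] at b3
        have hM1' : 2 * (M : ℤ) ≤ n := by exact_mod_cast hM1
        omega)
      (by
        refine le_trans (triple_biUnion_card_le n _ ((M : ℤ) + 3) (2 * (M : ℤ) + 2) (3 * (M : ℤ) + 1)) ?_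
        have b1 := card_neg_le₁ n ((M : ℤ) + 3)
        have b2 := card_neg_le n (2 * (M : ℤ) + 2)
        have b3 := card_neg_le₂ n (3 * (M : ℤ) + 1)
        have hM1' : 2 * (M : ℤ) ≤ n := by exact_mod_cast hM1
        have hM2' : (n : ℤ) ≤ 2 * M + 1 := by exact_mod_cast hM2
        omega)
    refine le_trans hbound ?_
    omega

lemma attacked_empty (n : ℕ) : attacked n ∅ = ∅ := by simp [attacked]

end QAux

open QAux

/-- There is an absolute constant c > 0 such that for every
positive integer m there is an N so that for every n ≥ N there is a placement
of exactly G(m) queens on the n×n board attacking at most m·n + c·m² squares. -/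
theorem exists_good_placement : ∃ c : ℝ, 0 < c ∧
    ∀ m : ℕ, 0 < m → ∃ N : ℕ, ∀ n : ℕ, N ≤ n →
    ∃ S : Finset (ℤ × ℤ), S ⊆ board n ∧ S.card = G m ∧
      ((attacked n S).card : ℝ) ≤ (m : ℝ) * n + c * (m : ℝ) ^ 2 := by
  refine ⟨100, by norm_num, fun m hm => ⟨10 * m + 30, fun n hn => ?_⟩⟩
  suffices key : ∃ S : Finset (ℤ × ℤ), S ⊆ board n ∧ S.card = G m ∧
      (attacked n S).card ≤ m * n + 100 * (m * m) by
    obtain ⟨S, h1, h2, h3⟩ := key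
    refine ⟨S, h1, h2, ?_⟩
    have h4 : ((attacked n S).card : ℝ) ≤ ((m * n + 100 * (m * m) : ℕ) : ℝ) :=
      Nat.cast_le.mpr h3
    refine le_trans h4 (le_of_eq ?_)
    push_cast
    ring
  rcases (by omega : m = 1 ∨ m = 2 ∨ m = 4 ∨ m = 10 ∨ m % 12 = 6 ∨ m % 12 = 0 ∨
      (m % 6 = 1 ∧ 7 ≤ m) ∨ (m % 6 = 2 ∧ 8 ≤ m) ∨ m % 6 = 3 ∨
      (m % 6 = 4 ∧ 16 ≤ m) ∨ m % 6 = 5) with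
    h | h | h | h | h | h | h | h | h | h | h
  · -- m = 1
    subst h
    exact ⟨∅, Finset.empty_subset _, by decide, by rw [attacked_empty]; simp⟩
  · -- m = 2
    subst h
    exact ⟨∅, Finset.empty_subset _, by decide, by rw [attacked_empty]; simp⟩
  · -- m = 4
    subst h
    obtain ⟨S, hSb, hcard, hatt⟩ := generic_construction 4 n 1 1 0 0 (by omega) (by omega)
      (by omega) (by omega) (by omega) (by omega)
    refine ⟨S, hSb, ?_, hatt⟩
    have : G 4 = 1 := by decide
    rw [this]
    omega
  · -- m = 10
    subst h
    obtain ⟨S, hSb, hcard, hatt⟩ := m10_construction n (by omega)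
    refine ⟨S, hSb, ?_, ?_⟩
    · have : G 10 = 9 := by decide
      omega
    · exact le_trans hatt (by omega)
  · -- m ≡ 6 (mod 12)
    obtain ⟨v, hv⟩ : ∃ v, m = 12 * v + 6 := ⟨(m - 6) / 12, by omega⟩
    obtain ⟨S, hSb, hcard, hatt⟩ := four_corner_construction m n v hv (by omega)
    refine ⟨S, hSb, ?_, hatt⟩
    have hG : G m = 12 * (v * v) + 12 * v + 4 := by
      have hm2 : m ^ 2 = 12 * (12 * (v * v) + 12 * v + 3) := by subst hv; ring
      unfold G
      rw [if_pos (by omega), hm2]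
      omega
    omega
  · -- m ≡ 0 (mod 12)
    obtain ⟨w, hw⟩ : ∃ w, m = 12 * w + 12 := ⟨(m - 12) / 12, by omega⟩
    obtain ⟨S, hSb, hcard, hatt⟩ := generic_construction m n (4 * w + 4) (4 * w + 4)
      (2 * w + 1) (2 * w + 2) (by omega) (by omega) (by omega) (by omega) (by omega) (by omega)
    refine ⟨S, hSb, ?_, hatt⟩
    have e1 : 4 * w + 4 - (2 * w + 2) = 2 * w + 2 := by omega
    have e2 : 4 * w + 4 - (2 * w + 1) = 2 * w + 3 := by omega
    rw [e1, e2] at hcard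
    have e3 : 2 * (2 * w + 3) + (2 * w + 1) - 1 = 6 * w + 6 := by omega
    rw [e3] at hcard
    have e4 : (2 * w + 2 + 1) * (2 * (2 * w + 2) + (2 * w + 2)) + (2 * w + 1) * (6 * w + 6) =
        24 * (w * w) + 48 * w + 24 := by ring
    rw [e4] at hcard
    have hG : G m = 12 * (w * w) + 24 * w + 12 := by
      have hm2 : m ^ 2 = 12 * (12 * (w * w) + 24 * w + 12) := by subst hw; ring
      unfold G
      rw [if_neg (by omega), hm2]
      omega
    omega
  · -- m ≡ 1 (mod 6), m ≥ 7
    obtain ⟨u, hu⟩ : ∃ u, m = 6 * u + 7 := ⟨(m - 7) / 6, by omega⟩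
    obtain ⟨S, hSb, hcard, hatt⟩ := generic_construction m n (2 * u + 2) (2 * u + 2)
      (u + 1) (u + 1) (by omega) (by omega) (by omega) (by omega) (by omega) (by omega)
    refine ⟨S, hSb, ?_, hatt⟩
    have e1 : 2 * u + 2 - (u + 1) = u + 1 := by omega
    rw [e1] at hcard
    have e2 : 2 * (u + 1) + (u + 1) - 1 = 3 * u + 2 := by omega
    rw [e2] at hcard
    have e3 : (u + 1 + 1) * (2 * (u + 1) + (u + 1)) + (u + 1) * (3 * u + 2) =
        6 * (u * u) + 14 * u + 8 := by ring
    rw [e3] at hcard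
    have hG : G m = 3 * (u * u) + 7 * u + 4 := by
      have hm2 : m ^ 2 = 12 * (3 * (u * u) + 7 * u + 4) + 1 := by subst hu; ring
      unfold G
      rw [if_neg (by omega), hm2]
      omega
    omega
  · -- m ≡ 2 (mod 6), m ≥ 8
    obtain ⟨u, hu⟩ : ∃ u, m = 6 * u + 8 := ⟨(m - 8) / 6, by omega⟩
    obtain ⟨S, hSb, hcard, hatt⟩ := generic_construction m n (2 * u + 2) (2 * u + 3)
      (u + 1) (u + 1) (by omega) (by omega) (by omega) (by omega) (by omega) (by omega)
    refine ⟨S, hSb, ?_, hatt⟩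
    have e1 : 2 * u + 2 - (u + 1) = u + 1 := by omega
    have e2 : 2 * u + 3 - (u + 1) = u + 2 := by omega
    rw [e1, e2] at hcard
    have e3 : 2 * (u + 2) + (u + 1) - 1 = 3 * u + 4 := by omega
    rw [e3] at hcard
    have e4 : (u + 1 + 1) * (2 * (u + 1) + (u + 1)) + (u + 1) * (3 * u + 4) =
        6 * (u * u) + 16 * u + 10 := by ring
    rw [e4] at hcard
    have hG : G m = 3 * (u * u) + 8 * u + 5 := by
      have hm2 : m ^ 2 = 12 * (3 * (u * u) + 8 * u + 5) + 4 := by subst hu; ring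
      unfold G
      rw [if_neg (by omega), hm2]
      omega
    omega
  · -- m ≡ 3 (mod 6)
    obtain ⟨u, hu⟩ : ∃ u, m = 6 * u + 3 := ⟨(m - 3) / 6, by omega⟩
    obtain ⟨S, hSb, hcard, hatt⟩ := generic_construction m n (2 * u + 1) (2 * u + 1)
      u u (by omega) (by omega) (by omega) (by omega) (by omega) (by omega)
    refine ⟨S, hSb, ?_, hatt⟩
    have e1 : 2 * u + 1 - u = u + 1 := by omega
    rw [e1] at hcard
    have e2 : 2 * (u + 1) + u - 1 = 3 * u + 1 := by omega
    rw [e2] at hcard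
    have e3 : (u + 1) * (2 * (u + 1) + u) + u * (3 * u + 1) = 6 * (u * u) + 6 * u + 2 := by
      ring
    rw [e3] at hcard
    have hG : G m = 3 * (u * u) + 3 * u + 1 := by
      have hm2 : m ^ 2 = 12 * (3 * (u * u) + 3 * u) + 9 := by subst hu; ring
      unfold G
      rw [if_pos (by omega), hm2]
      omega
    omega
  · -- m ≡ 4 (mod 6), m ≥ 16
    obtain ⟨u, hu⟩ : ∃ u, m = 6 * u + 16 := ⟨(m - 16) / 6, by omega⟩
    obtain ⟨S, hSb, hcard, hatt⟩ := generic_construction m n (2 * u + 5) (2 * u + 5)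
      (u + 2) (u + 3) (by omega) (by omega) (by omega) (by omega) (by omega) (by omega)
    refine ⟨S, hSb, ?_, hatt⟩
    have e1 : 2 * u + 5 - (u + 3) = u + 2 := by omega
    have e2 : 2 * u + 5 - (u + 2) = u + 3 := by omega
    rw [e1, e2] at hcard
    have e3 : 2 * (u + 3) + (u + 2) - 1 = 3 * u + 7 := by omega
    rw [e3] at hcard
    have e4 : (u + 3 + 1) * (2 * (u + 2) + (u + 3)) + (u + 2) * (3 * u + 7) =
        6 * (u * u) + 32 * u + 42 := by ring
    rw [e4] at hcard
    have hG : G m = 3 * (u * u) + 16 * u + 21 := by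
      have hm2 : m ^ 2 = 12 * (3 * (u * u) + 16 * u + 21) + 4 := by subst hu; ring
      unfold G
      rw [if_neg (by omega), hm2]
      omega
    omega
  · -- m ≡ 5 (mod 6)
    obtain ⟨u, hu⟩ : ∃ u, m = 6 * u + 5 := ⟨(m - 5) / 6, by omega⟩
    obtain ⟨S, hSb, hcard, hatt⟩ := generic_construction m n (2 * u + 1) (2 * u + 2)
      (u + 1) u (by omega) (by omega) (by omega) (by omega) (by omega) (by omega)
    refine ⟨S, hSb, ?_, hatt⟩
    have e1 : 2 * u + 1 - u = u + 1 := by omega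
    have e2 : 2 * u + 2 - (u + 1) = u + 1 := by omega
    rw [e1, e2] at hcard
    have e3 : 2 * (u + 1) + (u + 1) - 1 = 3 * u + 2 := by omega
    rw [e3] at hcard
    have e4 : (u + 1) * (2 * (u + 1) + u) + (u + 1) * (3 * u + 2) =
        6 * (u * u) + 10 * u + 4 := by ring
    rw [e4] at hcard
    have hG : G m = 3 * (u * u) + 5 * u + 2 := by
      have hm2 : m ^ 2 = 12 * (3 * (u * u) + 5 * u + 2) + 1 := by subst hu; ring
      unfold G
      rw [if_neg (by omega), hm2]
      omega
    omega
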